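/- Let q, r_k, r_v ≥ 1 be integers. Let B, T1, T2k, T2v, T3k, T3v ∈ ℝ^{q×q} be symmetric matrices satisfying: T3k + T2k = B, T3v + T2v = B, T3v = T2k, T3k = T2v, and T1 positive semidefinite. Let C_k ∈ ℝ^{q×r_k}, C_v ∈ ℝ^{q×r_v} be arbitrary matrices, H_k ∈ ℝ^{r_k×r_k} and H_v ∈ ℝ^{r_v×r_v} symmetric positive semidefinite, and α_k, α_v ≥ 0 real. Define the block matrix M = [[T1, −T1, (T3k − B)·C_k, T3k·C_v], [−T1, T1, T3v·C_k, (T3v − B)·C_v], [C_k^T·T2k, −C_k^T·T2k, α_k·H_k, 0], [−C_v^T·T2v, C_v^T·T2v, 0, α_v·H_v]]. Then for all a, b ∈ ℝ^q, c ∈ ℝ^{r_k}, d ∈ ℝ^{r_v}, the quadratic form satisfies (a, b, c, d)^T·M·(a, b, c, d) = (a − b)^T·T1·(a − b) + α_k·c^T·H_k·c + α_v·d^T·H_v·d ≥ 0; in particular M + M^T is positive semidefinite. -/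

import Mathlib

open Matrix


private lemma viscous_key {q r : ℕ} (S : Matrix (Fin q) (Fin q) ℝ) (hS : S.IsSymm)
    (C : Matrix (Fin q) (Fin r) ℝ) (c : Fin r → ℝ) (a : Fin q → ℝ) :
    c ⬝ᵥ ((Cᵀ * S) *ᵥ a) = a ⬝ᵥ ((S * C) *ᵥ c) := by
  rw [dotProduct_mulVec, ← mulVec_transpose, transpose_mul, transpose_transpose, hS.eq,
    dotProduct_comm]

private lemma viscous_quadform (q rk rv : ℕ)
    (B T1 T2k T2v T3k T3v : Matrix (Fin q) (Fin q) ℝ)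
    (hT2k : T2k.IsSymm) (hT2v : T2v.IsSymm)
    (hc1 : T3k + T2k = B) (hc2 : T3v + T2v = B) (hc3 : T3v = T2k) (hc4 : T3k = T2v)
    (Ck : Matrix (Fin q) (Fin rk) ℝ) (Cv : Matrix (Fin q) (Fin rv) ℝ)
    (Hk : Matrix (Fin rk) (Fin rk) ℝ) (Hv : Matrix (Fin rv) (Fin rv) ℝ)
    (αk αv : ℝ)
    (a b : Fin q → ℝ) (c : Fin rk → ℝ) (d : Fin rv → ℝ) :
      Sum.elim (Sum.elim a b) (Sum.elim c d) ⬝ᵥ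
          ((Matrix.fromBlocks
      (Matrix.fromBlocks T1 (-T1) (-T1) T1)
      (Matrix.fromBlocks ((T3k - B) * Ck) (T3k * Cv) (T3v * Ck) ((T3v - B) * Cv))
      (Matrix.fromBlocks (Ckᵀ * T2k) (-(Ckᵀ * T2k)) (-(Cvᵀ * T2v)) (Cvᵀ * T2v))
      (Matrix.fromBlocks (αk • Hk) 0 0 (αv • Hv))) *ᵥ Sum.elim (Sum.elim a b) (Sum.elim c d))
        = (a - b) ⬝ᵥ (T1 *ᵥ (a - b)) + αk * (c ⬝ᵥ (Hk *ᵥ c)) + αv * (d ⬝ᵥ (Hv *ᵥ d)) := by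
  have e1 : T3k - B = -T2k := by rw [← hc1]; abel
  have e2 : T3v - B = -T2v := by rw [← hc2]; abel
  rw [e1, e2, hc3, hc4]
  simp only [fromBlocks_mulVec, sumElim_dotProduct_sumElim, dotProduct_add, neg_mul,
    neg_mulVec, dotProduct_neg, zero_mulVec, smul_mulVec, dotProduct_smul,
    add_zero, zero_add, mulVec_sub, dotProduct_sub, sub_dotProduct, smul_eq_mul,
    Sum.elim_comp_inl, Sum.elim_comp_inr]
  rw [viscous_key T2k hT2k Ck c a, viscous_key T2k hT2k Ck c b,
    viscous_key T2v hT2v Cv d a, viscous_key T2v hT2v Cv d b]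
  simp only [Matrix.neg_mul, neg_mulVec, dotProduct_neg]
  ring

/-- **Entropy stability of the viscous SAT interface matrix.** Under the stated
conditions on the symmetric penalty matrices `T1, T2k, T2v, T3k, T3v` and the
facet quadrature matrix `B`, the quadratic form of the viscous interface block
matrix `M` reduces to `(a−b)ᵀT1(a−b) + α_k cᵀH_k c + α_v dᵀH_v d ≥ 0`; in
particular `M + Mᵀ` is positive semidefinite. -/
theorem viscous_sat_interface_matrix_psd
    (q rk rv : ℕ) (hq : 1 ≤ q) (hrk : 1 ≤ rk) (hrv : 1 ≤ rv)
    (B T1 T2k T2v T3k T3v : Matrix (Fin q) (Fin q) ℝ)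
    (hB : B.IsSymm) (hT1 : T1.IsSymm) (hT2k : T2k.IsSymm) (hT2v : T2v.IsSymm)
    (hT3k : T3k.IsSymm) (hT3v : T3v.IsSymm)
    (hc1 : T3k + T2k = B) (hc2 : T3v + T2v = B) (hc3 : T3v = T2k) (hc4 : T3k = T2v)
    (hT1psd : T1.PosSemidef)
    (Ck : Matrix (Fin q) (Fin rk) ℝ) (Cv : Matrix (Fin q) (Fin rv) ℝ)
    (Hk : Matrix (Fin rk) (Fin rk) ℝ) (Hv : Matrix (Fin rv) (Fin rv) ℝ)
    (hHk : Hk.PosSemidef) (hHv : Hv.PosSemidef)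
    (αk αv : ℝ) (hαk : 0 ≤ αk) (hαv : 0 ≤ αv)
    (M : Matrix ((Fin q ⊕ Fin q) ⊕ (Fin rk ⊕ Fin rv))
          ((Fin q ⊕ Fin q) ⊕ (Fin rk ⊕ Fin rv)) ℝ)
    (hM : M = Matrix.fromBlocks
      (Matrix.fromBlocks T1 (-T1) (-T1) T1)
      (Matrix.fromBlocks ((T3k - B) * Ck) (T3k * Cv) (T3v * Ck) ((T3v - B) * Cv))
      (Matrix.fromBlocks (Ckᵀ * T2k) (-(Ckᵀ * T2k)) (-(Cvᵀ * T2v)) (Cvᵀ * T2v))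
      (Matrix.fromBlocks (αk • Hk) 0 0 (αv • Hv))) :
    (∀ (a b : Fin q → ℝ) (c : Fin rk → ℝ) (d : Fin rv → ℝ),
      Sum.elim (Sum.elim a b) (Sum.elim c d) ⬝ᵥ
          (M *ᵥ Sum.elim (Sum.elim a b) (Sum.elim c d))
        = (a - b) ⬝ᵥ (T1 *ᵥ (a - b)) + αk * (c ⬝ᵥ (Hk *ᵥ c)) + αv * (d ⬝ᵥ (Hv *ᵥ d))
      ∧ 0 ≤ Sum.elim (Sum.elim a b) (Sum.elim c d) ⬝ᵥ
          (M *ᵥ Sum.elim (Sum.elim a b) (Sum.elim c d)))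
    ∧ (M + Mᵀ).PosSemidef := by
  subst hM
  have hquad := viscous_quadform q rk rv B T1 T2k T2v T3k T3v hT2k hT2v hc1 hc2 hc3 hc4
    Ck Cv Hk Hv αk αv
  have hnn : ∀ (a b : Fin q → ℝ) (c : Fin rk → ℝ) (d : Fin rv → ℝ),
      0 ≤ (a - b) ⬝ᵥ (T1 *ᵥ (a - b)) + αk * (c ⬝ᵥ (Hk *ᵥ c)) + αv * (d ⬝ᵥ (Hv *ᵥ d)) := by
    intro a b c d
    have h1 := hT1psd.dotProduct_mulVec_nonneg (a - b)
    have h2 := hHk.dotProduct_mulVec_nonneg c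
    have h3 := hHv.dotProduct_mulVec_nonneg d
    simp only [star_trivial] at h1 h2 h3
    exact add_nonneg (add_nonneg h1 (mul_nonneg hαk h2)) (mul_nonneg hαv h3)
  refine ⟨fun a b c d => ⟨hquad a b c d, ?_⟩, posSemidef_iff_dotProduct_mulVec.mpr ⟨?_, ?_⟩⟩
  · rw [hquad a b c d]; exact hnn a b c d
  · ext i j
    simp [conjTranspose_apply, transpose_apply, add_comm]
  · intro x
    set M' := (Matrix.fromBlocks
      (Matrix.fromBlocks T1 (-T1) (-T1) T1)
      (Matrix.fromBlocks ((T3k - B) * Ck) (T3k * Cv) (T3v * Ck) ((T3v - B) * Cv))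
      (Matrix.fromBlocks (Ckᵀ * T2k) (-(Ckᵀ * T2k)) (-(Cvᵀ * T2v)) (Cvᵀ * T2v))
      (Matrix.fromBlocks (αk • Hk) 0 0 (αv • Hv))) with hM'
    have hx : x = Sum.elim (Sum.elim (fun i => x (Sum.inl (Sum.inl i)))
        (fun i => x (Sum.inl (Sum.inr i))))
        (Sum.elim (fun i => x (Sum.inr (Sum.inl i))) (fun i => x (Sum.inr (Sum.inr i)))) := by
      funext y
      rcases y with (y | y) | (y | y) <;> rfl
    have ht : x ⬝ᵥ (M'ᵀ *ᵥ x) = x ⬝ᵥ (M' *ᵥ x) := by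
      rw [mulVec_transpose, dotProduct_comm, ← dotProduct_mulVec]
    have hq0 : 0 ≤ x ⬝ᵥ (M' *ᵥ x) := by
      rw [hx, hquad]
      exact hnn _ _ _ _
    simp only [star_trivial, add_mulVec, dotProduct_add, ht]
    linarith
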